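/- Let Z be a network zero-sum game with unique interior QRE p for exploration rates T_k > 0 and let G satisfy d(Z,G) < δ. Then any trajectory x(t) of the Q-learning dynamics on G satisfies lim sup_{t→∞} D_KL(p‖x(t)) ≤ N δ / T_min, where T_min = min_k T_k and N is the number of players. -/

import Mathlib

open Function

/-- A mixed strategy: a point of the probability simplex. -/
def IsSimplex {n : ℕ} (x : Fin n → ℝ) : Prop :=
  (∀ i, 0 ≤ x i) ∧ ∑ i, x i = 1

/-- The reward vector of player `k` in a network game. -/
def netReward {N : ℕ} {n : Fin N → ℕ} (E : Finset (Fin N × Fin N))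
    (A : ∀ k l : Fin N, Matrix (Fin (n k)) (Fin (n l)) ℝ)
    (x : ∀ l, Fin (n l) → ℝ) (k : Fin N) (i : Fin (n k)) : ℝ :=
  ∑ l ∈ Finset.univ.filter (fun l => (k, l) ∈ E), ∑ j, A k l i j * x l j

lemma klNonneg {m : ℕ} (w q : Fin m → ℝ) (hw : ∀ i, 0 < w i) (hq : ∀ i, 0 < q i)
    (hws : ∑ i, w i = 1) (hqs : ∑ i, q i = 1) :
    0 ≤ ∑ i, w i * (Real.log (w i) - Real.log (q i)) := by
  have h : ∑ i, w i * (Real.log (q i) - Real.log (w i)) ≤ 0 := by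
    have hle : ∀ i ∈ Finset.univ, w i * (Real.log (q i) - Real.log (w i)) ≤ q i - w i := by
      intro i _
      have h1 : Real.log (q i / w i) ≤ q i / w i - 1 :=
        Real.log_le_sub_one_of_pos (div_pos (hq i) (hw i))
      rw [Real.log_div (ne_of_gt (hq i)) (ne_of_gt (hw i))] at h1
      have := mul_le_mul_of_nonneg_left h1 (le_of_lt (hw i))
      calc w i * (Real.log (q i) - Real.log (w i)) ≤ w i * (q i / w i - 1) := this
        _ = q i - w i := by rw [mul_sub, mul_div_cancel₀ _ (ne_of_gt (hw i)), mul_one]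
    calc ∑ i, w i * (Real.log (q i) - Real.log (w i)) ≤ ∑ i, (q i - w i) :=
          Finset.sum_le_sum hle
      _ = 0 := by rw [Finset.sum_sub_distrib, hws, hqs]; ring
  have heq : ∑ i, w i * (Real.log (w i) - Real.log (q i)) =
      -∑ i, w i * (Real.log (q i) - Real.log (w i)) := by
    rw [← Finset.sum_neg_distrib]; exact Finset.sum_congr rfl fun i _ => by ring
  linarith

lemma gronwall_limsup (V D : ℝ → ℝ) (a c : ℝ) (ha : 0 < a)
    (hV : ∀ t, HasDerivAt V (D t) t) (hD : ∀ t, D t ≤ c - a * V t)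
    (hV0 : ∀ t, 0 ≤ V t) :
    Filter.limsup V Filter.atTop ≤ c / a := by
  set W : ℝ → ℝ := fun t => (V t - c / a) * Real.exp (a * t) with hWdef
  have hW : ∀ t, HasDerivAt W
      (D t * Real.exp (a * t) + (V t - c / a) * (Real.exp (a * t) * (a * 1))) t := by
    intro t
    exact ((hV t).sub_const _).mul (((hasDerivAt_id t).const_mul a).exp)
  have hW' : ∀ t, D t * Real.exp (a * t) + (V t - c / a) * (Real.exp (a * t) * (a * 1)) ≤ 0 := by
    intro t
    have h1 : D t * Real.exp (a * t) + (V t - c / a) * (Real.exp (a * t) * (a * 1))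
        = (D t + a * V t - c) * Real.exp (a * t) := by
      field_simp; ring
    rw [h1]
    apply mul_nonpos_of_nonpos_of_nonneg _ (Real.exp_nonneg _)
    have := hD t; linarith
  have hanti : Antitone W := by
    apply antitone_of_deriv_nonpos
    · exact fun t => (hW t).differentiableAt
    · intro t; rw [(hW t).deriv]; exact hW' t
  have hbound : ∀ t, 0 ≤ t → V t ≤ c / a + W 0 * Real.exp (-(a * t)) := by
    intro t ht
    have h1 : W t ≤ W 0 := hanti ht
    have h2 : (0:ℝ) < Real.exp (a * t) := Real.exp_pos _
    rw [← le_div_iff₀ h2] at h1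
    rw [Real.exp_neg, ← div_eq_mul_inv]
    linarith
  have htend : Filter.Tendsto (fun t => W 0 * Real.exp (-(a * t))) Filter.atTop (nhds 0) := by
    have h1 : Filter.Tendsto (fun t : ℝ => a * t) Filter.atTop Filter.atTop :=
      Filter.Tendsto.const_mul_atTop ha Filter.tendsto_id
    have h2 : Filter.Tendsto (fun t : ℝ => -(a * t)) Filter.atTop Filter.atBot :=
      Filter.tendsto_neg_atBot_iff.mpr h1
    have h3 := Real.tendsto_exp_atBot.comp h2
    have := h3.const_mul (W 0)
    simpa using this
  have hcb : Filter.IsCoboundedUnder (· ≤ ·) Filter.atTop V :=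
    Filter.IsBoundedUnder.isCoboundedUnder_le (Filter.isBoundedUnder_of ⟨0, fun t => hV0 t⟩)
  have key : ∀ ε > (0:ℝ), Filter.limsup V Filter.atTop ≤ c / a + ε := by
    intro ε hε
    apply Filter.limsup_le_of_le hcb
    have h4 : ∀ᶠ t in Filter.atTop, W 0 * Real.exp (-(a * t)) < ε :=
      htend.eventually_lt_const hε
    filter_upwards [h4, Filter.eventually_ge_atTop (0:ℝ)] with t h5 h6
    have := hbound t h6
    linarith
  exact le_of_forall_pos_le_add key

lemma polarize {N : ℕ} {n : Fin N → ℕ} (E : Finset (Fin N × Fin N))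
    (A : ∀ k l : Fin N, Matrix (Fin (n k)) (Fin (n l)) ℝ)
    (hzs : ∀ x : ∀ l, Fin (n l) → ℝ, (∀ l, IsSimplex (x l)) →
      ∑ k, ∑ i, x k i * netReward E A x k i = 0)
    (a b : ∀ l, Fin (n l) → ℝ) (ha : ∀ l, IsSimplex (a l)) (hb : ∀ l, IsSimplex (b l)) :
    (∑ k, ∑ i, a k i * netReward E A b k i) + (∑ k, ∑ i, b k i * netReward E A a k i) = 0 := by
  have hm : ∀ l, IsSimplex (fun j => (a l j + b l j) / 2) := by
    intro l
    constructor
    · intro j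
      have h1 := (ha l).1 j
      have h2 := (hb l).1 j
      positivity
    · rw [← Finset.sum_div, Finset.sum_add_distrib, (ha l).2, (hb l).2]
      norm_num
  have hlin : ∀ k i, netReward E A (fun l j => (a l j + b l j) / 2) k i =
      (netReward E A a k i + netReward E A b k i) / 2 := by
    intro k i
    unfold netReward
    rw [← Finset.sum_add_distrib, Finset.sum_div]
    refine Finset.sum_congr rfl fun l _ => ?_
    rw [← Finset.sum_add_distrib, Finset.sum_div]
    refine Finset.sum_congr rfl fun j _ => ?_
    ring
  have h0 := hzs (fun l j => (a l j + b l j) / 2) hm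
  have ha0 := hzs a ha
  have hb0 := hzs b hb
  have h1 : ∑ k, ∑ i, (fun j => (a k j + b k j) / 2) i *
        netReward E A (fun l j => (a l j + b l j) / 2) k i
      = ∑ k, ∑ i, (a k i * netReward E A a k i + a k i * netReward E A b k i
        + b k i * netReward E A a k i + b k i * netReward E A b k i) / 4 := by
    refine Finset.sum_congr rfl fun k _ => Finset.sum_congr rfl fun i _ => ?_
    rw [hlin k i]
    ring
  have h2 : ∑ k, ∑ i, (a k i * netReward E A a k i + a k i * netReward E A b k i
        + b k i * netReward E A a k i + b k i * netReward E A b k i) / 4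
      = ((∑ k, ∑ i, a k i * netReward E A a k i) + (∑ k, ∑ i, a k i * netReward E A b k i)
        + (∑ k, ∑ i, b k i * netReward E A a k i)
        + (∑ k, ∑ i, b k i * netReward E A b k i)) / 4 := by
    simp only [← Finset.sum_div, Finset.sum_add_distrib]
  rw [h1, h2] at h0
  rw [ha0, hb0] at h0
  linarith

/-- Theorem: Q-learning on a game `G` with `d(Z, G) < δ` for a network zero-sum game `Z`
with unique interior QRE `p` satisfies `lim sup_{t→∞} D_KL(p‖x(t)) ≤ Nδ/T_min`. -/
theorem KL_limsup_near_nzsg {N : ℕ} (hN : 0 < N) {n : Fin N → ℕ}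
    -- the network zero-sum game `Z`:
    (E : Finset (Fin N × Fin N)) (hE : ∀ k, (k, k) ∉ E)
    (A : ∀ k l : Fin N, Matrix (Fin (n k)) (Fin (n l)) ℝ)
    (hzs : ∀ x : ∀ l, Fin (n l) → ℝ, (∀ l, IsSimplex (x l)) →
      ∑ k, ∑ i, x k i * netReward E A x k i = 0)
    -- the game `G`, given by reward functions depending only on opponents' strategies:
    (r : (∀ l, Fin (n l) → ℝ) → ∀ k, Fin (n k) → ℝ)
    (hr : ∀ (k : Fin N) (x : ∀ l, Fin (n l) → ℝ) (y : Fin (n k) → ℝ),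
      r (update x k y) k = r x k)
    -- `d(Z, G) < δ`:
    (δ : ℝ) (hδ : 0 < δ)
    (hd : ∀ (k : Fin N) (x : ∀ l, Fin (n l) → ℝ) (y : Fin (n k) → ℝ),
      (∀ l, IsSimplex (x l)) → IsSimplex y →
      |(∑ i, y i * netReward E A x k i) - (∑ i, x k i * netReward E A x k i) -
        ((∑ i, y i * r x k i) - (∑ i, x k i * r x k i))| < δ)
    -- exploration rates:
    (T : Fin N → ℝ) (hT : ∀ k, 0 < T k)
    -- `p` is the unique interior QRE of `Z`:
    (p : ∀ l, Fin (n l) → ℝ) (hpPos : ∀ k i, 0 < p k i) (hp : ∀ l, IsSimplex (p l))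
    (hQRE : ∀ (k : Fin N) (i : Fin (n k)),
      p k i = Real.exp (netReward E A p k i / T k) /
        ∑ j, Real.exp (netReward E A p k j / T k))
    (hUnique : ∀ q : ∀ l, Fin (n l) → ℝ, (∀ l, IsSimplex (q l)) →
      (∀ (k : Fin N) (i : Fin (n k)),
        q k i = Real.exp (netReward E A q k i / T k) /
          ∑ j, Real.exp (netReward E A q k j / T k)) → q = p)
    -- a trajectory of the Q-learning dynamics on `G`:
    (x : ℝ → ∀ l, Fin (n l) → ℝ)
    (hxPos : ∀ s k i, 0 < x s k i) (hxS : ∀ s l, IsSimplex (x s l))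
    (hdyn : ∀ (s : ℝ) (k : Fin N) (i : Fin (n k)),
      HasDerivAt (fun τ => x τ k i)
        (x s k i * (r (x s) k i - (∑ j, x s k j * r (x s) k j) +
          T k * ∑ j, x s k j * Real.log (x s k j / x s k i))) s) :
    Filter.limsup (fun t => ∑ k, ∑ i, p k i * Real.log (p k i / x t k i)) Filter.atTop ≤
      (N : ℝ) * δ / (⨅ k, T k) := by
  classical
  -- each player has at least one strategy
  have hne : ∀ k : Fin N, Nonempty (Fin (n k)) := by
    intro k
    rw [← Fin.pos_iff_nonempty]
    rcases Nat.eq_zero_or_pos (n k) with h | h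
    · exfalso
      haveI : IsEmpty (Fin (n k)) := by rw [h]; infer_instance
      have h2 := (hp k).2
      rw [Finset.univ_eq_empty, Finset.sum_empty] at h2
      norm_num at h2
    · exact h
  -- the minimal exploration rate
  haveI : Nonempty (Fin N) := Fin.pos_iff_nonempty.mp hN
  have hbdd : BddBelow (Set.range T) := (Set.finite_range T).bddBelow
  have haleT : ∀ k, (⨅ k, T k) ≤ T k := fun k => ciInf_le hbdd k
  have hapos : 0 < ⨅ k, T k := by
    obtain ⟨k0, hk0⟩ := Finite.exists_min T
    exact lt_of_lt_of_le (hT k0) (le_ciInf hk0)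
  -- QRE log identity
  have hZpos : ∀ k, 0 < ∑ j, Real.exp (netReward E A p k j / T k) := fun k =>
    Finset.sum_pos (fun j _ => Real.exp_pos _) Finset.univ_nonempty
  have hup : ∀ k i, netReward E A p k i =
      T k * Real.log (p k i) +
        T k * Real.log (∑ j, Real.exp (netReward E A p k j / T k)) := by
    intro k i
    have h1 : Real.log (p k i) = netReward E A p k i / T k -
        Real.log (∑ j, Real.exp (netReward E A p k j / T k)) := by
      rw [hQRE k i, Real.log_div (Real.exp_ne_zero _) (ne_of_gt (hZpos k)), Real.log_exp]
    have hTk : T k ≠ 0 := (hT k).ne'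
    field_simp at h1
    linarith
  -- weighted QRE identity
  have hwu : ∀ (k : Fin N) (w : Fin (n k) → ℝ), (∑ i, w i) = 1 →
      ∑ i, w i * netReward E A p k i =
        T k * (∑ i, w i * Real.log (p k i)) +
        T k * Real.log (∑ j, Real.exp (netReward E A p k j / T k)) := by
    intro k w hw
    have h1 : ∀ i ∈ Finset.univ, w i * netReward E A p k i =
        T k * (w i * Real.log (p k i)) +
        (T k * Real.log (∑ j, Real.exp (netReward E A p k j / T k))) * w i := by
      intro i _; rw [hup k i]; ring
    rw [Finset.sum_congr rfl h1, Finset.sum_add_distrib, ← Finset.mul_sum,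
      ← Finset.mul_sum, hw, mul_one]
  -- value of Q(x s, p)
  have hQxp : ∀ s, ∑ k, ∑ i, x s k i * netReward E A p k i =
      ∑ k, T k * ((∑ i, x s k i * Real.log (p k i)) - (∑ i, p k i * Real.log (p k i))) := by
    intro s
    have h0 := hzs p hp
    have h1 : ∀ k ∈ Finset.univ, ∑ i, x s k i * netReward E A p k i
        = T k * ((∑ i, x s k i * Real.log (p k i)) - (∑ i, p k i * Real.log (p k i)))
          + ∑ i, p k i * netReward E A p k i := by
      intro k _
      rw [hwu k (x s k) (hxS s k).2, hwu k (p k) (hp k).2]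
      ring
    rw [Finset.sum_congr rfl h1, Finset.sum_add_distrib, h0, add_zero]
  set V : ℝ → ℝ := fun t => ∑ k, ∑ i, p k i * Real.log (p k i / x t k i) with hV_def
  -- the derivative of V
  have hVderiv : ∀ s, HasDerivAt V
      (∑ k, ∑ i, p k i * -((x s k i * (r (x s) k i - (∑ j, x s k j * r (x s) k j) +
        T k * ∑ j, x s k j * Real.log (x s k j / x s k i))) / x s k i)) s := by
    intro s
    have hfun : V = fun t => ∑ k, ∑ i, p k i * (Real.log (p k i) - Real.log (x t k i)) := by
      funext t
      exact Finset.sum_congr rfl fun k _ => Finset.sum_congr rfl fun i _ => by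
        rw [Real.log_div (ne_of_gt (hpPos k i)) (ne_of_gt (hxPos t k i))]
    rw [hfun]
    apply HasDerivAt.fun_sum
    intro k _
    apply HasDerivAt.fun_sum
    intro i _
    exact (((hdyn s k i).log (ne_of_gt (hxPos s k i))).const_sub
      (Real.log (p k i))).const_mul (p k i)
  -- V is nonnegative
  have hKL1 : ∀ s k, 0 ≤ (∑ i, p k i * Real.log (p k i)) -
      (∑ i, p k i * Real.log (x s k i)) := by
    intro s k
    have := klNonneg (p k) (x s k) (hpPos k) (hxPos s k) (hp k).2 (hxS s k).2
    have heq : ∑ i, p k i * (Real.log (p k i) - Real.log (x s k i))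
        = (∑ i, p k i * Real.log (p k i)) - (∑ i, p k i * Real.log (x s k i)) := by
      rw [← Finset.sum_sub_distrib]
      exact Finset.sum_congr rfl fun i _ => by ring
    linarith [heq ▸ this]
  have hKL2 : ∀ s k, 0 ≤ (∑ i, x s k i * Real.log (x s k i)) -
      (∑ i, x s k i * Real.log (p k i)) := by
    intro s k
    have := klNonneg (x s k) (p k) (hxPos s k) (hpPos k) (hxS s k).2 (hp k).2
    have heq : ∑ i, x s k i * (Real.log (x s k i) - Real.log (p k i))
        = (∑ i, x s k i * Real.log (x s k i)) - (∑ i, x s k i * Real.log (p k i)) := by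
      rw [← Finset.sum_sub_distrib]
      exact Finset.sum_congr rfl fun i _ => by ring
    linarith [heq ▸ this]
  have hVeq : ∀ s, V s = ∑ k, ((∑ i, p k i * Real.log (p k i)) -
      (∑ i, p k i * Real.log (x s k i))) := by
    intro s
    rw [hV_def]
    refine Finset.sum_congr rfl fun k _ => ?_
    rw [← Finset.sum_sub_distrib]
    refine Finset.sum_congr rfl fun i _ => ?_
    rw [Real.log_div (ne_of_gt (hpPos k i)) (ne_of_gt (hxPos s k i))]
    ring
  have hV0 : ∀ s, 0 ≤ V s := by
    intro s
    rw [hVeq s]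
    exact Finset.sum_nonneg fun k _ => hKL1 s k
  -- the key derivative bound
  have hDle : ∀ s, (∑ k, ∑ i, p k i * -((x s k i * (r (x s) k i -
        (∑ j, x s k j * r (x s) k j) +
        T k * ∑ j, x s k j * Real.log (x s k j / x s k i))) / x s k i))
      ≤ (N : ℝ) * δ - (⨅ k, T k) * V s := by
    intro s
    -- rewrite each player's contribution
    have e1 : ∀ k, ∑ i, p k i * -((x s k i * (r (x s) k i - (∑ j, x s k j * r (x s) k j) +
          T k * ∑ j, x s k j * Real.log (x s k j / x s k i))) / x s k i)
        = (∑ j, x s k j * r (x s) k j) - (∑ i, p k i * r (x s) k i)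
          + T k * ((∑ i, p k i * Real.log (x s k i)) - (∑ j, x s k j * Real.log (x s k j))) := by
      intro k
      have hinner : ∀ i : Fin (n k), ∑ j, x s k j * Real.log (x s k j / x s k i)
          = (∑ j, x s k j * Real.log (x s k j)) - Real.log (x s k i) := by
        intro i
        have h1 : ∀ j ∈ Finset.univ, x s k j * Real.log (x s k j / x s k i)
            = x s k j * Real.log (x s k j) - Real.log (x s k i) * x s k j := by
          intro j _
          rw [Real.log_div (ne_of_gt (hxPos s k j)) (ne_of_gt (hxPos s k i))]
          ring
        rw [Finset.sum_congr rfl h1, Finset.sum_sub_distrib, ← Finset.mul_sum,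
          (hxS s k).2, mul_one]
      have h2 : ∀ i ∈ Finset.univ, p k i * -((x s k i * (r (x s) k i -
            (∑ j, x s k j * r (x s) k j) +
            T k * ∑ j, x s k j * Real.log (x s k j / x s k i))) / x s k i)
          = ((∑ j, x s k j * r (x s) k j)
              - T k * (∑ j, x s k j * Real.log (x s k j))) * p k i
            - p k i * r (x s) k i + T k * (p k i * Real.log (x s k i)) := by
        intro i _
        rw [hinner i, mul_div_cancel_left₀ _ (ne_of_gt (hxPos s k i))]
        ring
      rw [Finset.sum_congr rfl h2, Finset.sum_add_distrib, Finset.sum_sub_distrib,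
        ← Finset.mul_sum, ← Finset.mul_sum, (hp k).2, mul_one]
      ring
    -- the per-player reward gap bound
    have e2 : ∀ k, (∑ j, x s k j * r (x s) k j) - (∑ i, p k i * r (x s) k i)
        ≤ δ + (∑ i, x s k i * netReward E A (x s) k i)
          - (∑ i, p k i * netReward E A (x s) k i) := by
      intro k
      have h := hd k (x s) (p k) (hxS s) (hp k)
      have h2 := (abs_lt.mp h).2
      linarith
    have sum0 : ∑ k, ∑ i, x s k i * netReward E A (x s) k i = 0 := hzs (x s) (hxS s)
    have sumpol := polarize E A hzs p (x s) hp (hxS s)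
    have hQ := hQxp s
    calc (∑ k, ∑ i, p k i * -((x s k i * (r (x s) k i - (∑ j, x s k j * r (x s) k j) +
          T k * ∑ j, x s k j * Real.log (x s k j / x s k i))) / x s k i))
        = ∑ k, ((∑ j, x s k j * r (x s) k j) - (∑ i, p k i * r (x s) k i)
          + T k * ((∑ i, p k i * Real.log (x s k i))
            - (∑ j, x s k j * Real.log (x s k j)))) :=
          Finset.sum_congr rfl fun k _ => e1 k
      _ ≤ ∑ k, (δ + (∑ i, x s k i * netReward E A (x s) k i)
          - (∑ i, p k i * netReward E A (x s) k i)
          + T k * ((∑ i, p k i * Real.log (x s k i))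
            - (∑ j, x s k j * Real.log (x s k j)))) := by
          apply Finset.sum_le_sum
          intro k _
          have := e2 k
          linarith
      _ = (N : ℝ) * δ + (∑ k, ∑ i, x s k i * netReward E A (x s) k i)
          - (∑ k, ∑ i, p k i * netReward E A (x s) k i)
          + ∑ k, T k * ((∑ i, p k i * Real.log (x s k i))
            - (∑ j, x s k j * Real.log (x s k j))) := by
          simp only [Finset.sum_add_distrib, Finset.sum_sub_distrib, Finset.sum_const,
            Finset.card_univ, Fintype.card_fin, nsmul_eq_mul]
      _ = (N : ℝ) * δ + (∑ k, ∑ i, x s k i * netReward E A p k i)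
          + ∑ k, T k * ((∑ i, p k i * Real.log (x s k i))
            - (∑ j, x s k j * Real.log (x s k j))) := by
          rw [sum0]
          have : ∑ k, ∑ i, p k i * netReward E A (x s) k i
              = -(∑ k, ∑ i, x s k i * netReward E A p k i) := by linarith [sumpol]
          rw [this]
          ring
      _ = (N : ℝ) * δ + ∑ k, (T k * ((∑ i, x s k i * Real.log (p k i))
            - (∑ i, p k i * Real.log (p k i)))
            + T k * ((∑ i, p k i * Real.log (x s k i))
            - (∑ j, x s k j * Real.log (x s k j)))) := by
          rw [hQ, add_assoc, ← Finset.sum_add_distrib]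
      _ ≤ (N : ℝ) * δ + ∑ k, -((⨅ k, T k) * ((∑ i, p k i * Real.log (p k i))
            - (∑ i, p k i * Real.log (x s k i)))) := by
          refine add_le_add le_rfl ?_
          apply Finset.sum_le_sum
          intro k _
          have hk1 := hKL1 s k
          have hk2 := hKL2 s k
          have hle := haleT k
          nlinarith [mul_le_mul_of_nonneg_right hle (add_nonneg hk1 hk2),
            mul_nonneg (le_of_lt hapos) hk2]
      _ = (N : ℝ) * δ - (⨅ k, T k) * V s := by
          rw [hVeq s, Finset.mul_sum, Finset.sum_neg_distrib]
          ring
  have := gronwall_limsup V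
    (fun s => ∑ k, ∑ i, p k i * -((x s k i * (r (x s) k i - (∑ j, x s k j * r (x s) k j) +
        T k * ∑ j, x s k j * Real.log (x s k j / x s k i))) / x s k i))
    (⨅ k, T k) ((N : ℝ) * δ) hapos hVderiv hDle hV0
  exact this
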